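/- Let ε be a nonincreasing nonnegative function, γ > 1, τ > 0, and define y₀ = 0, y_k = τ + γ·y_{k−1} for k ≥ 1 (so y_k = τ(γ^k − 1)/(γ−1)). Then for every c > 0 and σ ≥ cτ/(γ−1), ∑_{k=1}^∞ ε(σ + c·y_k) ≤ (1/log γ)·( ε(z)·log(((γ−1)/(cτ))·z) + ∫_z^∞ ε(x)/x dx ) with z = σ + cτ. -/

import Mathlib

open MeasureTheory Set Filter intervalIntegral

theorem stmt_6 (ε : ℝ → ℝ) (hmono : Antitone ε) (hnonneg : ∀ x, 0 ≤ ε x)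
    (γ τ c σ : ℝ) (hγ : 1 < γ) (hτ : 0 < τ) (hc : 0 < c)
    (y : ℕ → ℝ) (hy0 : y 0 = 0) (hyrec : ∀ k, y (k + 1) = τ + γ * y k)
    (hσ : c * τ / (γ - 1) ≤ σ) :
    ∑' k : ℕ, ε (σ + c * y (k + 1))
      ≤ (1 / Real.log γ) *
        (ε (σ + c * τ) * Real.log ((γ - 1) / (c * τ) * (σ + c * τ))
          + ∫ x in Set.Ioi (σ + c * τ), ε x / x) := by
  have hγ1 : (0:ℝ) < γ - 1 := by linarith
  have hγ0 : (0:ℝ) < γ := by linarith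
  have hlogγ : 0 < Real.log γ := Real.log_pos hγ
  set A : ℝ := c * τ / (γ - 1) with hA
  have hA0 : 0 < A := by positivity
  have hAγ : A * (γ - 1) = c * τ := by rw [hA]; field_simp
  have hsA : A ≤ σ := hσ
  -- closed form
  have hcy : ∀ k, c * y k = A * γ ^ k - A := by
    intro k
    induction k with
    | zero => simp [hy0]
    | succ n ih =>
      have h1 : c * y (n+1) = c * τ + γ * (c * y n) := by rw [hyrec]; ring
      rw [h1, ih, pow_succ]
      nlinarith [hAγ]
  set x : ℕ → ℝ := fun k => (σ - A) + A * γ ^ (k + 1) with hxdef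
  have hxy : ∀ k, σ + c * y (k + 1) = x k := by
    intro k; rw [hcy]; simp only [hxdef]; ring
  set z : ℝ := σ + c * τ with hz
  have hx0 : x 0 = z := by
    simp only [hxdef, hz, zero_add, pow_one]
    nlinarith [hAγ]
  have hz0 : 0 < z := by
    rw [hz]; nlinarith
  have hxmono : ∀ k, x k < x (k + 1) := by
    intro k
    simp only [hxdef]
    have : γ ^ (k+1) < γ ^ (k+2) := pow_lt_pow_right₀ hγ (by omega)
    nlinarith
  have hxz : ∀ k, z ≤ x k := by
    intro k
    rw [← hx0]
    induction k with
    | zero => exact le_refl _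
    | succ n ih => exact ih.trans (hxmono n).le
  have hxpos : ∀ k, 0 < x k := fun k => hz0.trans_le (hxz k)
  have hxle : ∀ k, x (k + 1) ≤ γ * x k := by
    intro k
    simp only [hxdef]
    have h2 : γ ^ (k+1+1) = γ * γ ^ (k+1) := by ring
    nlinarith [pow_pos hγ0 (k+1)]
  -- antitone of t ↦ ε t / t on positives
  have hAnti : ∀ a b : ℝ, 0 < a → AntitoneOn (fun t => ε t / t) (uIcc a b) → True := fun _ _ _ _ => trivial
  have hantiOn : ∀ k, AntitoneOn (fun t => ε t / t) (uIcc (x k) (x (k+1))) := by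
    intro k s hs t ht hst
    have hicc : uIcc (x k) (x (k+1)) = Icc (x k) (x (k+1)) := uIcc_of_le (hxmono k).le
    rw [hicc] at hs ht
    have hs0 : 0 < s := lt_of_lt_of_le (hxpos k) hs.1
    have ht0 : 0 < t := lt_of_lt_of_le (hxpos k) ht.1
    have h1 : ε t ≤ ε s := hmono hst
    have h2 : (1:ℝ)/t ≤ 1/s := by
      apply one_div_le_one_div_of_le hs0 hst
    calc ε t / t = ε t * (1/t) := by ring
    _ ≤ ε s * (1/s) := by
        apply mul_le_mul h1 h2 (by positivity) (hnonneg s)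
    _ = ε s / s := by ring
  have hII : ∀ k, IntervalIntegrable (fun t => ε t / t) volume (x k) (x (k+1)) :=
    fun k => (hantiOn k).intervalIntegrable
  -- per-interval bounds
  have hIconst : ∀ k (K : ℝ), IntervalIntegrable (fun t => K * (1/t)) volume (x k) (x (k+1)) := by
    intro k K
    apply IntervalIntegrable.const_mul
    apply intervalIntegrable_one_div (f := fun t : ℝ => t)
    · intro t ht
      rw [uIcc_of_le (hxmono k).le] at ht
      exact (lt_of_lt_of_le (hxpos k) ht.1).ne'
    · exact continuous_id.continuousOn
  have hIval : ∀ k (K : ℝ), (∫ t in (x k)..(x (k+1)), K * (1/t))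
      = K * (Real.log (x (k+1)) - Real.log (x k)) := by
    intro k K
    rw [intervalIntegral.integral_const_mul, integral_one_div_of_pos (hxpos k) (hxpos (k+1)),
      Real.log_div (hxpos (k+1)).ne' (hxpos k).ne']
  have hlow : ∀ k, ε (x (k+1)) * (Real.log (x (k+1)) - Real.log (x k))
      ≤ ∫ t in (x k)..(x (k+1)), ε t / t := by
    intro k
    rw [← hIval k (ε (x (k+1)))]
    apply intervalIntegral.integral_mono_on (hxmono k).le (hIconst k _) (hII k)
    intro t ht
    have ht0 : 0 < t := lt_of_lt_of_le (hxpos k) ht.1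
    calc ε (x (k+1)) * (1/t) ≤ ε t * (1/t) := by
          apply mul_le_mul_of_nonneg_right (hmono ht.2) (by positivity)
    _ = ε t / t := by ring
  have hup : ∀ k, (∫ t in (x k)..(x (k+1)), ε t / t)
      ≤ ε (x k) * Real.log γ := by
    intro k
    have h1 : (∫ t in (x k)..(x (k+1)), ε t / t)
        ≤ ε (x k) * (Real.log (x (k+1)) - Real.log (x k)) := by
      rw [← hIval k (ε (x k))]
      apply intervalIntegral.integral_mono_on (hxmono k).le (hII k) (hIconst k _)
      intro t ht
      have ht0 : 0 < t := lt_of_lt_of_le (hxpos k) ht.1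
      calc ε t / t = ε t * (1/t) := by ring
      _ ≤ ε (x k) * (1/t) := by
          apply mul_le_mul_of_nonneg_right (hmono ht.1) (by positivity)
    have h2 : Real.log (x (k+1)) - Real.log (x k) ≤ Real.log γ := by
      have := Real.log_le_log (hxpos (k+1)) (hxle k)
      rw [Real.log_mul hγ0.ne' (hxpos k).ne'] at this
      linarith
    calc (∫ t in (x k)..(x (k+1)), ε t / t)
        ≤ ε (x k) * (Real.log (x (k+1)) - Real.log (x k)) := h1
    _ ≤ ε (x k) * Real.log γ := mul_le_mul_of_nonneg_left h2 (hnonneg _)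
  -- basic nonnegativity facts about the RHS
  have hintnn : 0 ≤ ∫ t in Set.Ioi z, ε t / t := by
    apply setIntegral_nonneg measurableSet_Ioi
    intro t ht
    exact div_nonneg (hnonneg t) (le_of_lt (hz0.trans ht))
  have hzA2 : (γ - 1) / (c * τ) * z = z / A := by
    rw [hA]; field_simp
  have hAz : A < z := by
    rw [hz]; nlinarith
  have hlognn : 0 ≤ Real.log ((γ - 1) / (c * τ) * z) := by
    rw [hzA2]
    apply Real.log_nonneg
    rw [le_div_iff₀ hA0, one_mul]
    exact hAz.le
  have htsum_eq : ∑' k : ℕ, ε (σ + c * y (k + 1)) = ∑' k : ℕ, ε (x k) :=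
    tsum_congr fun k => by rw [hxy]
  rw [htsum_eq]
  by_cases hsum : Summable (fun k : ℕ => ε (x k))
  case neg =>
    rw [tsum_eq_zero_of_not_summable hsum]
    have h1 : 0 ≤ ε z * Real.log ((γ - 1) / (c * τ) * z) := mul_nonneg (hnonneg z) hlognn
    have h2 : 0 ≤ 1 / Real.log γ := by positivity
    exact mul_nonneg h2 (by linarith)
  case pos =>
  -- interval integrability from x 0 = z to x n
  have hIIz : ∀ n, IntervalIntegrable (fun t => ε t / t) volume (x 0) (x n) := by
    intro n
    induction n with
    | zero => exact IntervalIntegrable.refl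
    | succ n ih => exact ih.trans (hII n)
  -- x tends to infinity
  have hxt : Tendsto x atTop atTop := by
    have h1 : Tendsto (fun k : ℕ => γ ^ (k + 1)) atTop atTop :=
      (tendsto_pow_atTop_atTop_of_one_lt hγ).comp (tendsto_add_atTop_nat 1)
    have h2 : Tendsto (fun k : ℕ => A * γ ^ (k + 1)) atTop atTop := h1.const_mul_atTop hA0
    have h3 := tendsto_atTop_add_const_left atTop (σ - A) h2
    exact h3
  -- the interval integrals of the norm are uniformly bounded
  have hnorm_eq : ∀ n, (∫ t in (x 0)..(x n), ‖ε t / t‖) = ∫ t in (x 0)..(x n), ε t / t := by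
    intro n
    apply intervalIntegral.integral_congr
    intro t ht
    rw [uIcc_of_le (by rw [hx0]; exact hxz n)] at ht
    have ht0 : 0 < t := lt_of_lt_of_le (by rw [← hx0] at hz0; exact hz0) ht.1
    exact Real.norm_of_nonneg (div_nonneg (hnonneg t) ht0.le)
  have hsplit : ∀ n, (∫ t in (x 0)..(x n), ε t / t)
      = ∑ k ∈ Finset.range n, ∫ t in (x k)..(x (k+1)), ε t / t := by
    intro n
    rw [intervalIntegral.sum_integral_adjacent_intervals (fun k _ => hII k)]
  have hbdd : ∀ n, (∫ t in (x 0)..(x n), ε t / t)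
      ≤ Real.log γ * ∑' k : ℕ, ε (x k) := by
    intro n
    rw [hsplit n]
    calc ∑ k ∈ Finset.range n, ∫ t in (x k)..(x (k+1)), ε t / t
        ≤ ∑ k ∈ Finset.range n, ε (x k) * Real.log γ :=
          Finset.sum_le_sum fun k _ => hup k
    _ = Real.log γ * ∑ k ∈ Finset.range n, ε (x k) := by
          rw [Finset.mul_sum]; exact Finset.sum_congr rfl fun k _ => by ring
    _ ≤ Real.log γ * ∑' k : ℕ, ε (x k) := by
          apply mul_le_mul_of_nonneg_left _ hlogγ.le
          exact Summable.sum_le_tsum _ (fun k _ => hnonneg _) hsum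
  -- integrability on Ioi z
  have hIIz' : ∀ n, IntervalIntegrable (fun t => ε t / t) volume z (x n) := by
    intro n; rw [← hx0]; exact hIIz n
  have hInt : IntegrableOn (fun t => ε t / t) (Set.Ioi z) volume := by
    apply integrableOn_Ioi_of_intervalIntegral_norm_bounded
      (Real.log γ * ∑' k : ℕ, ε (x k)) z (fun n => (hIIz' n).1) hxt
    apply Eventually.of_forall
    intro n
    calc (∫ t in z..(x n), ‖ε t / t‖) = ∫ t in (x 0)..(x n), ‖ε t / t‖ := by rw [hx0]
    _ = ∫ t in (x 0)..(x n), ε t / t := hnorm_eq n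
    _ ≤ Real.log γ * ∑' k : ℕ, ε (x k) := hbdd n
  -- the key partial-sum bound
  have hkey : ∀ N, (∑ k ∈ Finset.range N, ε (x k)) * Real.log γ
      ≤ (∫ t in Set.Ioi z, ε t / t) + ε z * Real.log ((γ - 1) / (c * τ) * z) := by
    intro N
    cases N with
    | zero =>
      simp only [Finset.range_zero, Finset.sum_empty, zero_mul]
      exact add_nonneg hintnn (mul_nonneg (hnonneg z) hlognn)
    | succ M =>
      -- per-term inequality
      have hterm : ∀ k, ε (x (k+1)) * Real.log γ
          ≤ (∫ t in (x k)..(x (k+1)), ε t / t)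
            + ε z * (Real.log γ - (Real.log (x (k+1)) - Real.log (x k))) := by
        intro k
        have hΔnn : 0 ≤ Real.log (x (k+1)) - Real.log (x k) := by
          have := Real.log_le_log (hxpos k) (hxmono k).le
          linarith
        have hΔle : Real.log (x (k+1)) - Real.log (x k) ≤ Real.log γ := by
          have := Real.log_le_log (hxpos (k+1)) (hxle k)
          rw [Real.log_mul hγ0.ne' (hxpos k).ne'] at this
          linarith
        have hεle : ε (x (k+1)) ≤ ε z := hmono (hxz (k+1))
        have h1 := hlow k
        nlinarith [hnonneg (x (k+1))]
      have hsum1 : ∑ k ∈ Finset.range M, ε (x (k+1)) * Real.log γ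
          ≤ (∫ t in (x 0)..(x M), ε t / t)
            + ε z * (M * Real.log γ - (Real.log (x M) - Real.log (x 0))) := by
        calc ∑ k ∈ Finset.range M, ε (x (k+1)) * Real.log γ
            ≤ ∑ k ∈ Finset.range M, ((∫ t in (x k)..(x (k+1)), ε t / t)
              + ε z * (Real.log γ - (Real.log (x (k+1)) - Real.log (x k)))) :=
              Finset.sum_le_sum fun k _ => hterm k
        _ = (∫ t in (x 0)..(x M), ε t / t)
              + ε z * (M * Real.log γ - (Real.log (x M) - Real.log (x 0))) := by
            rw [Finset.sum_add_distrib, ← hsplit M, ← Finset.mul_sum]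
            congr 1
            congr 1
            rw [Finset.sum_sub_distrib, Finset.sum_const, Finset.card_range,
              Finset.sum_range_sub (fun k => Real.log (x k))]
            simp [nsmul_eq_mul]
      -- bound the integral piece
      have hint2 : (∫ t in (x 0)..(x M), ε t / t) ≤ ∫ t in Set.Ioi z, ε t / t := by
        rw [intervalIntegral.integral_of_le (by rw [hx0]; exact hxz M), hx0]
        apply setIntegral_mono_set hInt
        · filter_upwards [ae_restrict_mem measurableSet_Ioi] with t ht
          exact div_nonneg (hnonneg t) (le_of_lt (hz0.trans ht))
        · exact (Ioc_subset_Ioi_self).eventuallyLE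
      -- bound the log-defect piece
      have hlog2 : ε z * (M * Real.log γ - (Real.log (x M) - Real.log (x 0)))
          ≤ ε z * (Real.log ((γ - 1) / (c * τ) * z) - Real.log γ) := by
        apply mul_le_mul_of_nonneg_left _ (hnonneg z)
        rw [hx0, hzA2, Real.log_div hz0.ne' hA0.ne']
        have hAx : A * γ ^ (M + 1) ≤ x M := by
          simp only [hxdef]; linarith
        have := Real.log_le_log (by positivity) hAx
        rw [Real.log_mul hA0.ne' (by positivity), Real.log_pow] at this
        push_cast at this
        linarith
      have hsum0 : ∑ k ∈ Finset.range (M+1), ε (x k)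
          = ε (x 0) + ∑ k ∈ Finset.range M, ε (x (k+1)) := by
        rw [Finset.sum_range_succ']; ring
      rw [hsum0, hx0, add_mul, Finset.sum_mul]
      have : ∑ k ∈ Finset.range M, ε (x (k+1)) * Real.log γ
          ≤ (∫ t in Set.Ioi z, ε t / t)
            + ε z * (Real.log ((γ - 1) / (c * τ) * z) - Real.log γ) :=
        hsum1.trans (add_le_add hint2 hlog2)
      nlinarith [hnonneg z]
  -- conclude
  apply Real.tsum_le_of_sum_range_le (fun k => hnonneg _)
  intro N
  have h := hkey N
  rw [← le_div_iff₀ hlogγ] at h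
  calc ∑ k ∈ Finset.range N, ε (x k)
      ≤ ((∫ t in Set.Ioi z, ε t / t) + ε z * Real.log ((γ - 1) / (c * τ) * z)) / Real.log γ := h
  _ = 1 / Real.log γ * (ε z * Real.log ((γ - 1) / (c * τ) * z) + ∫ t in Set.Ioi z, ε t / t) := by
      ring
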